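/- Let n ≥ 1, let 0 < β < 1, 0 < α < n with α + β < n, and let 1 < p < n/(α+β) and 1/q = 1/p − (α+β)/n. Suppose b : ℝⁿ → ℝ is locally integrable and there is a constant A such that ‖M_{α,b} f‖_{L^q(ℝⁿ)} ≤ A ‖f‖_{L^p(ℝⁿ)} for every f ∈ L^p(ℝⁿ). Then there is a constant C such that for every ball B ⊂ ℝⁿ, (|B|⁻¹ ∫_B |b(x) − b_B|^q dx)^{1/q} ≤ C |B|^{β/n}. -/

import Mathlib

open MeasureTheory Metric Set
open scoped ENNReal NNReal

/-- The fractional maximal function `M_α f` on `ℝⁿ`: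
`M_α f (x) = sup_{B ∋ x} |B|^{α/n - 1} ∫_B |f|`. -/
noncomputable def fracMax (n : ℕ) (α : ℝ) (f : EuclideanSpace ℝ (Fin n) → ℝ)
    (x : EuclideanSpace ℝ (Fin n)) : ℝ≥0∞ :=
  ⨆ (c : EuclideanSpace ℝ (Fin n)) (r : ℝ) (_ : 0 < r) (_ : x ∈ ball c r),
    volume (ball c r) ^ (α / n - 1) * ∫⁻ y in ball c r, (‖f y‖₊ : ℝ≥0∞)

/-- The fractional maximal commutator `M_{α,b} f`:
`M_{α,b} f (x) = sup_{B ∋ x} |B|^{α/n - 1} ∫_B |b(x) - b(y)| |f(y)| dy`. -/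
noncomputable def fracMaxComm (n : ℕ) (α : ℝ) (b f : EuclideanSpace ℝ (Fin n) → ℝ)
    (x : EuclideanSpace ℝ (Fin n)) : ℝ≥0∞ :=
  ⨆ (c : EuclideanSpace ℝ (Fin n)) (r : ℝ) (_ : 0 < r) (_ : x ∈ ball c r),
    volume (ball c r) ^ (α / n - 1) *
      ∫⁻ y in ball c r, (‖b x - b y‖₊ : ℝ≥0∞) * (‖f y‖₊ : ℝ≥0∞)

/-- The local fractional maximal function `M_{α,B₀} f`, supremum over balls `B` with
`x ∈ B ⊆ B₀`. For `α = 0` this is the local Hardy–Littlewood maximal function `M_{B₀}`. -/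
noncomputable def fracMaxLocal (n : ℕ) (α : ℝ) (B₀ : Set (EuclideanSpace ℝ (Fin n)))
    (f : EuclideanSpace ℝ (Fin n) → ℝ) (x : EuclideanSpace ℝ (Fin n)) : ℝ≥0∞ :=
  ⨆ (c : EuclideanSpace ℝ (Fin n)) (r : ℝ) (_ : 0 < r) (_ : x ∈ ball c r)
    (_ : ball c r ⊆ B₀),
    volume (ball c r) ^ (α / n - 1) * ∫⁻ y in ball c r, (‖f y‖₊ : ℝ≥0∞)

/-- The average `b_B = |B|⁻¹ ∫_B b` of `b` over the ball `B = ball c r`. -/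
noncomputable def ballAvg (n : ℕ) (b : EuclideanSpace ℝ (Fin n) → ℝ)
    (c : EuclideanSpace ℝ (Fin n)) (r : ℝ) : ℝ :=
  (volume (ball c r)).toReal⁻¹ * ∫ y in ball c r, b y

/-- if `M_{α,b}` is bounded from `L^p(ℝⁿ)` to `L^q(ℝⁿ)` with
`1 < p < n/(α+β)` and `1/q = 1/p - (α+β)/n`, then
`(|B|⁻¹ ∫_B |b - b_B|^q)^{1/q} ≤ C |B|^{β/n}` for every ball `B`. -/
theorem stmt1 (n : ℕ) (hn : 1 ≤ n) (α β : ℝ) (hβ0 : 0 < β) (hβ1 : β < 1)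
    (hα0 : 0 < α) (hαn : α < n) (hαβn : α + β < n)
    (p q : ℝ) (hp1 : 1 < p) (hp2 : p < n / (α + β))
    (hq : 1 / q = 1 / p - (α + β) / n)
    (b : EuclideanSpace ℝ (Fin n) → ℝ) (hb : LocallyIntegrable b volume)
    (A : ℝ)
    (hA : ∀ f : EuclideanSpace ℝ (Fin n) → ℝ, MemLp f (ENNReal.ofReal p) volume →
      (∫⁻ x, fracMaxComm n α b f x ^ q) ^ (1 / q) ≤
        ENNReal.ofReal A * eLpNorm f (ENNReal.ofReal p) volume) :
    ∃ C : ℝ, ∀ (c : EuclideanSpace ℝ (Fin n)) (r : ℝ), 0 < r →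
      ((volume (ball c r)).toReal⁻¹ *
          ∫ x in ball c r, |b x - ballAvg n b c r| ^ q) ^ (1 / q) ≤
        C * (volume (ball c r)).toReal ^ (β / n) := by
  have hn0 : (0:ℝ) < n := by exact_mod_cast hn
  have hαβ0 : (0:ℝ) < α + β := by linarith
  have hp0 : (0:ℝ) < p := by linarith
  have h1 : p * (α + β) < n := (lt_div_iff₀ hαβ0).mp hp2
  have h2 : (α + β) / n < 1 / p := by rw [div_lt_div_iff₀ hn0 hp0]; nlinarith
  have hq0' : 0 < 1/q := by rw [hq]; linarith
  have hq0 : 0 < q := one_div_pos.mp hq0'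
  have hαn' : α/(n:ℝ) ≤ (α+β)/(n:ℝ) := by gcongr; linarith
  have hpa : 0 ≤ 1/p - α/(n:ℝ) := by linarith
  refine ⟨max A 0, ?_⟩
  intro c r hr
  set B : Set (EuclideanSpace ℝ (Fin n)) := ball c r with hB
  set V : ℝ≥0∞ := volume B with hV
  have hV0 : V ≠ 0 := (measure_ball_pos volume c hr).ne'
  have hVt : V ≠ ⊤ := measure_ball_lt_top.ne
  have hVpos : 0 < V.toReal := ENNReal.toReal_pos hV0 hVt
  set f : EuclideanSpace ℝ (Fin n) → ℝ := B.indicator (fun _ => 1) with hf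
  have hmB : MeasurableSet B := measurableSet_ball
  have hmem : MemLp f (ENNReal.ofReal p) volume :=
    memLp_indicator_const _ hmB 1 (Or.inr hVt)
  have hA' := hA f hmem
  rw [eLpNorm_indicator_const hmB (by simp [ENNReal.ofReal_eq_zero]; linarith)
      ENNReal.ofReal_ne_top, ENNReal.toReal_ofReal hp0.le] at hA'
  set bB := ballAvg n b c r with hbB
  have hbint : IntegrableOn b B volume :=
    (hb.integrableOn_isCompact (isCompact_closedBall c r)).mono_set ball_subset_closedBall
  have hVrpow : V ^ (α/(n:ℝ)) = V ^ (α/(n:ℝ) - 1) * V := by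
    rw [show α/(n:ℝ) = (α/(n:ℝ)-1) + 1 by ring, ENNReal.rpow_add _ _ hV0 hVt,
      ENNReal.rpow_one]
    norm_num
  -- pointwise lower bound on B
  have key : ∀ x ∈ B, V ^ (α/(n:ℝ)) * ENNReal.ofReal |b x - bB| ≤ fracMaxComm n α b f x := by
    intro x hx
    refine le_trans ?_
      (le_iSup_of_le c (le_iSup_of_le r (le_iSup_of_le hr (le_iSup_of_le hx le_rfl))))
    have hcong : ∫⁻ y in B, (‖b x - b y‖₊ : ℝ≥0∞) * (‖f y‖₊ : ℝ≥0∞)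
        = ∫⁻ y in B, (‖b x - b y‖₊ : ℝ≥0∞) := by
      refine setLIntegral_congr_fun hmB (fun y hy => ?_)
      simp [hf, indicator_of_mem hy]
    rw [hcong]
    have hgint : IntegrableOn (fun y => b x - b y) B volume :=
      (integrableOn_const measure_ball_lt_top.ne enorm_ne_top).sub hbint
    have hcomp : V.toReal * (b x - bB) = V.toReal * b x - ∫ y in B, b y := by
      rw [hbB, ballAvg, mul_sub]
      congr 1
      rw [← mul_assoc]
      rw [show V.toReal * (volume (ball c r)).toReal⁻¹ = 1 from
        mul_inv_cancel₀ hVpos.ne']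
      rw [one_mul]
    have habs : V.toReal * |b x - bB| = |∫ y in B, (b x - b y)| := by
      rw [integral_sub (show Integrable (fun _ => b x) (volume.restrict B) from
          integrableOn_const measure_ball_lt_top.ne enorm_ne_top) hbint,
        setIntegral_const, smul_eq_mul, measureReal_def]
      rw [← abs_of_pos hVpos, ← abs_mul, abs_of_pos hVpos]
      rw [hcomp]
    have h1' : ENNReal.ofReal (V.toReal * |b x - bB|) ≤ ∫⁻ y in B, (‖b x - b y‖₊ : ℝ≥0∞) := by
      simp_rw [← enorm_eq_nnnorm]
      rw [← ofReal_integral_norm_eq_lintegral_enorm hgint, habs]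
      exact ENNReal.ofReal_le_ofReal (by
        simpa [Real.norm_eq_abs] using
          norm_integral_le_integral_norm (f := fun y => b x - b y) (μ := volume.restrict B))
    calc V ^ (α/(n:ℝ)) * ENNReal.ofReal |b x - bB|
        = V ^ (α/(n:ℝ) - 1) * (V * ENNReal.ofReal |b x - bB|) := by
          rw [hVrpow, mul_assoc]
      _ = V ^ (α/(n:ℝ) - 1) * ENNReal.ofReal (V.toReal * |b x - bB|) := by
          rw [ENNReal.ofReal_mul hVpos.le, ENNReal.ofReal_toReal hVt]
      _ ≤ V ^ (α/(n:ℝ) - 1) * ∫⁻ y in B, (‖b x - b y‖₊ : ℝ≥0∞) :=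
          mul_le_mul_right h1' _
  -- integrate
  set L := ∫⁻ x in B, ENNReal.ofReal (|b x - bB| ^ q) with hL
  have hVa_ne_top : V ^ (q * (α/(n:ℝ))) ≠ ⊤ :=
    ENNReal.rpow_ne_top_of_nonneg (by positivity) hVt
  have hLle : V ^ (q * (α/(n:ℝ))) * L ≤ ∫⁻ x, fracMaxComm n α b f x ^ q := by
    rw [hL, ← lintegral_const_mul' _ _ hVa_ne_top]
    refine le_trans ?_ (setLIntegral_le_lintegral B _)
    refine setLIntegral_mono' hmB fun x hx => ?_
    have hkey := ENNReal.rpow_le_rpow (key x hx) hq0.le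
    rw [ENNReal.mul_rpow_of_nonneg _ _ hq0.le, ← ENNReal.rpow_mul,
      ENNReal.ofReal_rpow_of_nonneg (abs_nonneg _) hq0.le] at hkey
    calc V ^ (q * (α/(n:ℝ))) * ENNReal.ofReal (|b x - bB| ^ q)
        = V ^ (α/(n:ℝ) * q) * ENNReal.ofReal (|b x - bB| ^ q) := by ring_nf
      _ ≤ fracMaxComm n α b f x ^ q := hkey
  -- combine with hA'
  have hstep : L ^ (1/q) ≤ ENNReal.ofReal A * V ^ (1/p - α/(n:ℝ)) := by
    have h3 : (V ^ (q * (α/(n:ℝ))) * L) ^ (1/q) ≤ ENNReal.ofReal A * V ^ (1/p) := by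
      refine le_trans (ENNReal.rpow_le_rpow hLle hq0'.le) ?_
      simpa using hA'
    rw [ENNReal.mul_rpow_of_nonneg _ _ hq0'.le, ← ENNReal.rpow_mul] at h3
    have hexp : q * (α/(n:ℝ)) * (1/q) = α/(n:ℝ) := by field_simp
    rw [hexp] at h3
    have h4 := mul_le_mul_right h3 (V ^ (-(α/(n:ℝ))))
    rw [← mul_assoc, ← ENNReal.rpow_add _ _ hV0 hVt] at h4
    simp only [neg_add_cancel, ENNReal.rpow_zero, one_mul] at h4
    refine h4.trans ?_
    rw [mul_comm (V ^ (-(α/(n:ℝ)))) _, mul_assoc, ← ENNReal.rpow_add _ _ hV0 hVt,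
      show 1/p + -(α/(n:ℝ)) = 1/p - α/(n:ℝ) by ring]
  -- rewrite real integral as toReal of L
  have hmeas : AEStronglyMeasurable (fun x => |b x - bB| ^ q) (volume.restrict B) := by
    have hm1 : AEStronglyMeasurable (fun x => b x - bB) (volume.restrict B) :=
      hb.aestronglyMeasurable.restrict.sub aestronglyMeasurable_const
    have hm2 := ((hm1.norm.aemeasurable.pow aemeasurable_const).aestronglyMeasurable :
      AEStronglyMeasurable (fun x => ‖b x - bB‖ ^ q) (volume.restrict B))
    simpa [Real.norm_eq_abs] using hm2
  have hInt : (∫ x in B, |b x - bB| ^ q) = L.toReal := by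
    rw [hL, integral_eq_lintegral_of_nonneg_ae
      (Filter.Eventually.of_forall fun x => by positivity) hmeas]
  rw [hInt]
  -- final estimate
  have hfinal : (V⁻¹ * L) ^ (1/q) ≤ ENNReal.ofReal A * V ^ (β/(n:ℝ)) := by
    rw [ENNReal.mul_rpow_of_nonneg _ _ hq0'.le, ENNReal.inv_rpow, ← ENNReal.rpow_neg]
    refine le_trans (mul_le_mul_right hstep _) ?_
    rw [← mul_assoc, mul_comm (V ^ (-(1/q))) _, mul_assoc, ← ENNReal.rpow_add _ _ hV0 hVt]
    have hexp2 : -(1/q) + (1/p - α/(n:ℝ)) = β/(n:ℝ) := by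
      rw [hq]; field_simp; ring
    rw [hexp2]
  have hmono := ENNReal.toReal_mono (ENNReal.mul_ne_top ENNReal.ofReal_ne_top
    (ENNReal.rpow_ne_top_of_nonneg (by positivity) hVt)) hfinal
  have lhs_eq : (V.toReal⁻¹ * L.toReal) ^ (1/q) = ((V⁻¹ * L) ^ (1/q)).toReal := by
    rw [← ENNReal.toReal_inv, ← ENNReal.toReal_mul, ENNReal.toReal_rpow]
  have rhs_eq : (ENNReal.ofReal A * V ^ (β/(n:ℝ))).toReal = max A 0 * V.toReal ^ (β/(n:ℝ)) := by
    rw [ENNReal.toReal_mul, ENNReal.toReal_ofReal', ENNReal.toReal_rpow]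
  rw [lhs_eq]
  rw [rhs_eq] at hmono
  exact hmono
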